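/- Let p be a prime and let ψ be a quadratic Dirichlet character modulo p (i.e. ψ² is trivial, so ψ takes values in {0, 1, −1}). Then for every positive integer n not divisible by p, |∑_{0<d∣n} ψ(d)·d| ≥ n·(1/2)^{ω(n)}, where ω(n) denotes the number of distinct prime factors of n. -/

import Mathlib

open Finset

theorem sigmaTilde_lower_bound (p : ℕ) (hp : p.Prime)
    (ψ : DirichletCharacter ℂ p) (hψ : ψ ^ 2 = 1)
    (n : ℕ) (hn : 0 < n) (hpn : ¬ p ∣ n) :
    (n : ℝ) * (1 / 2) ^ n.primeFactors.card
      ≤ ‖∑ d ∈ n.divisors, ψ d * d‖ := by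
  classical
  haveI : Fact p.Prime := ⟨hp⟩
  set g : ArithmeticFunction ℂ := ⟨fun d => ψ d * d, by simp⟩ with hg_def
  have hg : g.IsMultiplicative := by
    constructor
    · simp [hg_def]
    · intro m k hmk
      simp only [hg_def, ArithmeticFunction.coe_mk]
      push_cast
      rw [map_mul]
      ring
  set F : ArithmeticFunction ℂ :=
    ((ArithmeticFunction.zeta : ArithmeticFunction ℕ) : ArithmeticFunction ℂ) * g with hF_def
  have hF : F.IsMultiplicative := ArithmeticFunction.isMultiplicative_zeta.natCast.mul hg
  have hFapp : ∀ m : ℕ, F m = ∑ d ∈ m.divisors, ψ d * d := by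
    intro m
    rw [hF_def, ArithmeticFunction.coe_zeta_mul_apply]
    rfl
  -- key prime power bound
  have hkey : ∀ q k : ℕ, q.Prime → q ∣ n → 1 ≤ k →
      (q : ℝ) ^ k * (1 / 2) ≤ ‖F (q ^ k)‖ := by
    intro q k hq hqn hk
    have hqp : q ≠ p := by
      rintro rfl
      exact hpn hqn
    have hne : ((q : ℕ) : ZMod p) ≠ 0 := by
      rw [Ne, ZMod.natCast_eq_zero_iff]
      intro h
      exact hqp ((Nat.prime_dvd_prime_iff_eq hp hq).mp h).symm
    have hunit : IsUnit ((q : ℕ) : ZMod p) := isUnit_iff_ne_zero.mpr hne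
    have hsq : ψ q ^ 2 = 1 := by
      have h1 := congrArg (fun χ : DirichletCharacter ℂ p => χ (q : ZMod p)) hψ
      simpa [MulChar.one_apply hunit, pow_two] using h1
    have hval : ψ q = 1 ∨ ψ q = -1 := sq_eq_one_iff.mp hsq
    have hFq : F (q ^ k) = ∑ i ∈ range (k + 1), (ψ q * q) ^ i := by
      rw [hFapp, Nat.sum_divisors_prime_pow hq]
      refine Finset.sum_congr rfl fun i _ => ?_
      push_cast
      rw [map_pow, mul_pow]
    have hq2 : (2 : ℝ) ≤ (q : ℝ) := by exact_mod_cast hq.two_le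
    have hqk : (q : ℝ) ≤ (q : ℝ) ^ k := le_self_pow₀ (by linarith) (by omega)
    rcases hval with h1 | h1
    · -- ψ q = 1
      rw [hFq, h1]
      have : (∑ i ∈ range (k + 1), ((1 : ℂ) * (q : ℂ)) ^ i)
          = ((∑ i ∈ range (k + 1), (q : ℝ) ^ i : ℝ) : ℂ) := by
        push_cast
        simp
      rw [this, Complex.norm_real, Real.norm_eq_abs]
      have hpos : (0 : ℝ) ≤ ∑ i ∈ range (k + 1), (q : ℝ) ^ i :=
        Finset.sum_nonneg fun i _ => by positivity
      rw [abs_of_nonneg hpos]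
      have hle : (q : ℝ) ^ k ≤ ∑ i ∈ range (k + 1), (q : ℝ) ^ i :=
        Finset.single_le_sum (fun i _ => by positivity) (self_mem_range_succ k)
      nlinarith [pow_nonneg (by linarith : (0:ℝ) ≤ (q:ℝ)) k]
    · -- ψ q = -1
      rw [hFq, h1]
      have : (∑ i ∈ range (k + 1), ((-1 : ℂ) * (q : ℂ)) ^ i)
          = ((∑ i ∈ range (k + 1), (-(q : ℝ)) ^ i : ℝ) : ℂ) := by
        rw [show ((-1 : ℂ) * (q : ℂ)) = -(q : ℂ) from by ring]
        push_cast
        rfl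
      rw [this, Complex.norm_real, Real.norm_eq_abs]
      set S : ℝ := ∑ i ∈ range (k + 1), (-(q : ℝ)) ^ i with hS
      have hgeom : S * (-(q : ℝ) - 1) = (-(q : ℝ)) ^ (k + 1) - 1 := geom_sum_mul _ _
      have habs : |S| * ((q : ℝ) + 1) = |(-(q : ℝ)) ^ (k + 1) - 1| := by
        rw [← hgeom, abs_mul]
        congr 1
        rw [abs_of_nonpos (by linarith)]
        ring
      have hlow : (q : ℝ) ^ (k + 1) - 1 ≤ |(-(q : ℝ)) ^ (k + 1) - 1| := by
        have h2 : |(-(q : ℝ)) ^ (k + 1)| = (q : ℝ) ^ (k + 1) := by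
          rw [abs_pow, abs_neg, abs_of_nonneg (by linarith)]
        calc (q : ℝ) ^ (k + 1) - 1 = |(-(q : ℝ)) ^ (k + 1)| - |(1 : ℝ)| := by
              rw [h2, abs_one]
          _ ≤ |(-(q : ℝ)) ^ (k + 1) - 1| := abs_sub_abs_le_abs_sub _ _
      have hk1 : (q : ℝ) ^ (k + 1) = (q : ℝ) ^ k * (q : ℝ) := pow_succ _ _
      nlinarith [abs_nonneg S, habs, hlow]
  -- combine multiplicatively
  have hn0 : n ≠ 0 := hn.ne'
  have hfact : F n = n.factorization.prod fun q k => F (q ^ k) :=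
    hF.multiplicative_factorization F hn0
  have habsF : ‖F n‖
      = ∏ q ∈ n.primeFactors, ‖F (q ^ n.factorization q)‖ := by
    rw [hfact, Finsupp.prod, Nat.support_factorization, norm_prod]
  have hlhs : (n : ℝ) * (1 / 2) ^ n.primeFactors.card
      = ∏ q ∈ n.primeFactors, ((q : ℝ) ^ n.factorization q * (1 / 2)) := by
    rw [Finset.prod_mul_distrib, Finset.prod_const]
    congr 1
    have := Nat.factorization_prod_pow_eq_self hn0
    calc (n : ℝ) = ((n.factorization.prod fun q k => q ^ k : ℕ) : ℝ) := by rw [this]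
      _ = ∏ q ∈ n.primeFactors, (q : ℝ) ^ n.factorization q := by
          rw [Finsupp.prod, Nat.support_factorization]
          push_cast
          rfl
  rw [← hFapp, habsF, hlhs]
  refine Finset.prod_le_prod (fun q hq => by positivity) fun q hq => ?_
  exact hkey q _ (Nat.prime_of_mem_primeFactors hq) (Nat.dvd_of_mem_primeFactors hq)
    (Nat.Prime.factorization_pos_of_dvd (Nat.prime_of_mem_primeFactors hq) hn0
      (Nat.dvd_of_mem_primeFactors hq))
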